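/- arXiv:chao-dyn/9412010 — 5 statements merged into one kernel-verified Lean document; each statement's English description precedes it below -/
import Mathlib

section
/- With ρ(x,y) = −exp(x+y)·x^{-(a+1)}·y^{-(b+1)} and Φ(x,y) = exp(x+y)·x^{-a}·y^{-b}, the predator-prey vector field satisfies ẋ = ρ^{-1}·∂Φ/∂y and ẏ = −ρ^{-1}·∂Φ/∂x on the open quadrant x>0, y>0; i.e., the system is Hamiltonian with Hamiltonian Φ for the Poisson structure Λ^{ij} = ρ^{-1}ε^{ij}. -/
open Real

noncomputable def pdX (f : ℝ × ℝ → ℝ) (p : ℝ × ℝ) : ℝ := fderiv ℝ f p (1, 0)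
noncomputable def pdY (f : ℝ × ℝ → ℝ) (p : ℝ × ℝ) : ℝ := fderiv ℝ f p (0, 1)

lemma hasFDerivAt_phi (a b x y : ℝ) (hx : 0 < x) (hy : 0 < y) :
    HasFDerivAt (fun p : ℝ × ℝ => Real.exp (p.1 + p.2) * p.1 ^ (-a) * p.2 ^ (-b))
      ((Real.exp (x + y) * x ^ (-a)) • ((-b * y ^ (-b - 1)) • ContinuousLinearMap.snd ℝ ℝ ℝ)
        + (y ^ (-b)) • (Real.exp (x + y) • ((-a * x ^ (-a - 1)) • ContinuousLinearMap.fst ℝ ℝ ℝ)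
            + (x ^ (-a)) • (Real.exp (x + y) • (ContinuousLinearMap.fst ℝ ℝ ℝ + ContinuousLinearMap.snd ℝ ℝ ℝ)))) (x, y) := by
  have hsum : HasFDerivAt (fun p : ℝ × ℝ => p.1 + p.2)
      (ContinuousLinearMap.fst ℝ ℝ ℝ + ContinuousLinearMap.snd ℝ ℝ ℝ) (x, y) :=
    (hasFDerivAt_fst).add (hasFDerivAt_snd)
  have h1 : HasFDerivAt (fun p : ℝ × ℝ => Real.exp (p.1 + p.2))
      (Real.exp (x + y) • (ContinuousLinearMap.fst ℝ ℝ ℝ + ContinuousLinearMap.snd ℝ ℝ ℝ)) (x, y) :=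
    by have := (Real.hasDerivAt_exp (x + y)).comp_hasFDerivAt (x, y) hsum; exact this
  have h2 : HasFDerivAt (fun p : ℝ × ℝ => p.1 ^ (-a))
      ((-a * x ^ (-a - 1)) • ContinuousLinearMap.fst ℝ ℝ ℝ) (x, y) :=
    by have := (Real.hasDerivAt_rpow_const (p := -a) (Or.inl hx.ne')).comp_hasFDerivAt (x, y) (hasFDerivAt_fst (𝕜 := ℝ) (E := ℝ) (F := ℝ) (p := (x, y))); exact this
  have h3 : HasFDerivAt (fun p : ℝ × ℝ => p.2 ^ (-b))
      ((-b * y ^ (-b - 1)) • ContinuousLinearMap.snd ℝ ℝ ℝ) (x, y) :=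
    by have := (Real.hasDerivAt_rpow_const (p := -b) (Or.inl hy.ne')).comp_hasFDerivAt (x, y) (hasFDerivAt_snd (𝕜 := ℝ) (E := ℝ) (F := ℝ) (p := (x, y))); exact this
  exact (h1.mul h2).mul h3

/-- The predator-prey system is Hamiltonian with Hamiltonian Φ for the Poisson
structure Λ = ρ⁻¹ε: ẋ = ρ⁻¹∂Φ/∂y and ẏ = −ρ⁻¹∂Φ/∂x on x>0, y>0. -/
theorem predator_prey_hamiltonian (a b : ℝ) (ha : 0 ≤ a) (hb : 0 ≤ b)
    (Φ ρ : ℝ × ℝ → ℝ)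
    (hΦ : ∀ p : ℝ × ℝ, Φ p = Real.exp (p.1 + p.2) * p.1 ^ (-a) * p.2 ^ (-b))
    (hρ : ∀ p : ℝ × ℝ, ρ p = -(Real.exp (p.1 + p.2) * p.1 ^ (-(a + 1)) * p.2 ^ (-(b + 1)))) :
    ∀ x y : ℝ, 0 < x → 0 < y →
      x * (b - y) = (ρ (x, y))⁻¹ * pdY Φ (x, y) ∧
      y * (x - a) = -((ρ (x, y))⁻¹ * pdX Φ (x, y)) := by
  intro x y hx hy
  have hΦfun : Φ = fun p : ℝ × ℝ => Real.exp (p.1 + p.2) * p.1 ^ (-a) * p.2 ^ (-b) :=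
    funext hΦ
  have hd := hasFDerivAt_phi a b x y hx hy
  rw [← hΦfun] at hd
  have hf := hd.fderiv
  have hpdY : pdY Φ (x, y) =
      (Real.exp (x + y) * x ^ (-a)) * (-b * y ^ (-b - 1)) +
      y ^ (-b) * (x ^ (-a) * Real.exp (x + y)) := by
    simp [pdY, hf, ContinuousLinearMap.add_apply, ContinuousLinearMap.smul_apply]
    try ring
  have hpdX : pdX Φ (x, y) =
      y ^ (-b) * (Real.exp (x + y) * (-a * x ^ (-a - 1)) + x ^ (-a) * Real.exp (x + y)) := by
    simp [pdX, hf, ContinuousLinearMap.add_apply, ContinuousLinearMap.smul_apply]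
    try ring
  have hE : Real.exp (x + y) ≠ 0 := (Real.exp_pos _).ne'
  have hxa : (0:ℝ) < x ^ (-a) := Real.rpow_pos_of_pos hx _
  have hyb : (0:ℝ) < y ^ (-b) := Real.rpow_pos_of_pos hy _
  have hxa1 : x ^ (-(a + 1)) = x ^ (-a) * x⁻¹ := by
    rw [show -(a+1) = -a + (-1) by ring, Real.rpow_add hx, Real.rpow_neg_one]
  have hxa1' : x ^ (-a - 1) = x ^ (-a) * x⁻¹ := by
    rw [show -a - 1 = -a + (-1) by ring, Real.rpow_add hx, Real.rpow_neg_one]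
  have hyb1 : y ^ (-(b + 1)) = y ^ (-b) * y⁻¹ := by
    rw [show -(b+1) = -b + (-1) by ring, Real.rpow_add hy, Real.rpow_neg_one]
  have hyb1' : y ^ (-b - 1) = y ^ (-b) * y⁻¹ := by
    rw [show -b - 1 = -b + (-1) by ring, Real.rpow_add hy, Real.rpow_neg_one]
  constructor
  · rw [hpdY, hρ, hyb1', hyb1, hxa1]
    field_simp
    try ring
  · rw [hpdX, hρ, hxa1', hyb1, hxa1]
    field_simp
    try ring
end

section
/- For κ > 2 and Δ = (κ²−4)^{1/2}, the function Φ^O(x,y) = ½(x²+y²+κxy)·|(κx+2y+Δx)/(κx+2y−Δx)|^{κ/Δ} is a first integral of the over-damped harmonic oscillator ẋ = y, ẏ = −x−κy, on the open set where (κx+2y)² ≠ Δ²x². -/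
open Real

/-- For κ > 2, Δ = √(κ²−4), the function
Φ^O = ½(x²+y²+κxy)·|(κx+2y+Δx)/(κx+2y−Δx)|^{κ/Δ} is a first integral of the
over-damped oscillator ẋ = y, ẏ = −x−κy on {(κx+2y)² ≠ Δ²x²}. -/
theorem over_damped_first_integral
    (κ Δ : ℝ) (hκ : 2 < κ) (hΔ : Δ = Real.sqrt (κ ^ 2 - 4))
    (Φ : ℝ × ℝ → ℝ)
    (hΦ : ∀ p : ℝ × ℝ, Φ p = (p.1 ^ 2 + p.2 ^ 2 + κ * p.1 * p.2) / 2 *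
      |(κ * p.1 + 2 * p.2 + Δ * p.1) / (κ * p.1 + 2 * p.2 - Δ * p.1)| ^ (κ / Δ)) :
    ∀ x y : ℝ, (κ * x + 2 * y) ^ 2 ≠ Δ ^ 2 * x ^ 2 →
      y * pdX Φ (x, y) + (-x - κ * y) * pdY Φ (x, y) = 0 := by
  have h4 : (0:ℝ) < κ ^ 2 - 4 := by nlinarith
  have hΔpos : 0 < Δ := hΔ ▸ Real.sqrt_pos.mpr h4
  have hΔsq : Δ ^ 2 = κ ^ 2 - 4 := by rw [hΔ, Real.sq_sqrt h4.le]
  intro x y h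
  set c := κ / Δ with hc
  set f1 : ℝ × ℝ → ℝ := fun p => (κ + Δ) * p.1 + 2 * p.2 with hf1
  set f2 : ℝ × ℝ → ℝ := fun p => (κ - Δ) * p.1 + 2 * p.2 with hf2
  have huw : f1 (x, y) * f2 (x, y) ≠ 0 := by
    simp only [hf1, hf2]
    intro hcon
    apply h
    nlinarith [hcon]
  have hu : f1 (x, y) ≠ 0 := fun e => huw (by rw [e]; ring)
  have hw : f2 (x, y) ≠ 0 := fun e => huw (by rw [e]; ring)
  set F : ℝ × ℝ → ℝ := fun p => (p.1 * p.1 + p.2 * p.2 + κ * p.1 * p.2) * (1/2) *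
      Real.exp ((Real.log (f1 p) - Real.log (f2 p)) * c) with hF
  -- derivatives
  have h1 : HasFDerivAt f1
      ((κ + Δ) • ContinuousLinearMap.fst ℝ ℝ ℝ + (2:ℝ) • ContinuousLinearMap.snd ℝ ℝ ℝ) (x, y) :=
    (hasFDerivAt_fst.const_mul (κ + Δ)).add (hasFDerivAt_snd.const_mul 2)
  have h2 : HasFDerivAt f2
      ((κ - Δ) • ContinuousLinearMap.fst ℝ ℝ ℝ + (2:ℝ) • ContinuousLinearMap.snd ℝ ℝ ℝ) (x, y) :=
    (hasFDerivAt_fst.const_mul (κ - Δ)).add (hasFDerivAt_snd.const_mul 2)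
  have hexp := (((h1.log hu).sub (h2.log hw)).mul_const c).exp
  have hp1 : HasFDerivAt (fun p : ℝ × ℝ => p.1) (ContinuousLinearMap.fst ℝ ℝ ℝ) (x, y) :=
    hasFDerivAt_fst
  have hp2 : HasFDerivAt (fun p : ℝ × ℝ => p.2) (ContinuousLinearMap.snd ℝ ℝ ℝ) (x, y) :=
    hasFDerivAt_snd
  have hQ := (((hp1.mul hp1).add (hp2.mul hp2)).add
      ((hp1.const_mul κ).mul hp2)).mul_const ((1:ℝ)/2)
  have hFD := hQ.mul hexp
  -- Φ = F near (x,y)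
  have heq : Φ =ᶠ[nhds (x, y)] F := by
    have hc1 : ∀ᶠ p in nhds (x, y), f1 p ≠ 0 :=
      ((continuous_const.mul continuous_fst).add (continuous_const.mul continuous_snd)).continuousAt.eventually_ne hu
    have hc2 : ∀ᶠ p in nhds (x, y), f2 p ≠ 0 :=
      ((continuous_const.mul continuous_fst).add (continuous_const.mul continuous_snd)).continuousAt.eventually_ne hw
    filter_upwards [hc1, hc2] with p hp1 hp2
    rw [hΦ, hF]
    have hq : (p.1 ^ 2 + p.2 ^ 2 + κ * p.1 * p.2) / 2 = (p.1 * p.1 + p.2 * p.2 + κ * p.1 * p.2) * (1/2) := by ring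
    rw [hq]
    congr 1
    have e1 : κ * p.1 + 2 * p.2 + Δ * p.1 = f1 p := by simp [hf1]; ring
    have e2 : κ * p.1 + 2 * p.2 - Δ * p.1 = f2 p := by simp [hf2]; ring
    rw [e1, e2]
    have hpos : 0 < |f1 p / f2 p| := abs_pos.mpr (div_ne_zero hp1 hp2)
    rw [Real.rpow_def_of_pos hpos, Real.log_abs, Real.log_div hp1 hp2]
  have hΦD := hFD.congr_of_eventuallyEq heq
  rw [pdX, pdY, hΦD.fderiv]
  simp only [ContinuousLinearMap.add_apply, ContinuousLinearMap.smul_apply,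
    ContinuousLinearMap.coe_fst', ContinuousLinearMap.coe_snd',
    ContinuousLinearMap.sub_apply, ContinuousLinearMap.smulRight_apply,
    ContinuousLinearMap.one_apply, smul_eq_mul, Pi.mul_apply, Pi.add_apply, Pi.sub_apply]
  set u := f1 (x, y) with hud
  set w := f2 (x, y) with hwd
  set E := rexp ((log u - log w) * c) with hE
  have hue : u = (κ + Δ) * x + 2 * y := by rw [hud]
  have hwe : w = (κ - Δ) * x + 2 * y := by rw [hwd]
  have hΔne : Δ ≠ 0 := hΔpos.ne'
  rw [hc] at *
  rw [hue, hwe] at *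
  have hu' : x * (κ + Δ) + y * 2 ≠ 0 := fun e => hu (by linear_combination e)
  have hw' : x * (κ - Δ) + y * 2 ≠ 0 := fun e => hw (by linear_combination e)
  field_simp
  linear_combination (y * x ^ 3 * κ ^ 2 * E * Δ + y ^ 2 * x ^ 2 * κ * E * Δ +
    x ^ 4 * κ * E * Δ) * hΔsq
end

section
/- For 0 < κ < 2, the damped harmonic oscillator ẋ = y, ẏ = −x−κy is Hamiltonian with respect to (Φ^D, ρ^D): it holds that y = (ρ^D)^{-1}·∂Φ^D/∂y and −x−κy = −(ρ^D)^{-1}·∂Φ^D/∂x, on the open set where κx+2y ≠ 0. -/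
open Real

/-- For 0 < κ < 2 the damped oscillator ẋ = y, ẏ = −x−κy is Hamiltonian with
respect to (Φ^D, ρ^D) on {κx+2y ≠ 0}. -/
theorem damped_oscillator_hamiltonian
    (κ Δ : ℝ) (hκ : 0 < κ) (hκ2 : κ < 2) (hΔ : Δ = Real.sqrt (4 - κ ^ 2))
    (Φ ρ : ℝ × ℝ → ℝ)
    (hΦ : ∀ p : ℝ × ℝ, Φ p = (p.1 ^ 2 + p.2 ^ 2 + κ * p.1 * p.2) / 2 *
      Real.exp (2 * κ / Δ * Real.arctan (Δ * p.1 / (κ * p.1 + 2 * p.2))))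
    (hρ : ∀ p : ℝ × ℝ, ρ p =
      Real.exp (2 * κ / Δ * Real.arctan (Δ * p.1 / (κ * p.1 + 2 * p.2)))) :
    ∀ x y : ℝ, κ * x + 2 * y ≠ 0 →
      y = (ρ (x, y))⁻¹ * pdY Φ (x, y) ∧
      -x - κ * y = -((ρ (x, y))⁻¹ * pdX Φ (x, y)) := by
  intro x y hxy
  have hκ4 : 0 < 4 - κ ^ 2 := by nlinarith
  have hΔpos : 0 < Δ := hΔ ▸ Real.sqrt_pos.2 hκ4
  have hΔsq : Δ ^ 2 = 4 - κ ^ 2 := by rw [hΔ, Real.sq_sqrt hκ4.le]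
  have hDsq : 0 < (κ * x + 2 * y) ^ 2 := by positivity
  have hQpos : 0 < x ^ 2 + y ^ 2 + κ * x * y := by
    nlinarith [sq_nonneg x, mul_nonneg hκ4.le (sq_nonneg x)]
  -- differentiability chain
  have hfst : HasFDerivAt (fun p : ℝ × ℝ => p.1) (ContinuousLinearMap.fst ℝ ℝ ℝ) (x, y) :=
    hasFDerivAt_fst
  have hsnd : HasFDerivAt (fun p : ℝ × ℝ => p.2) (ContinuousLinearMap.snd ℝ ℝ ℝ) (x, y) :=
    hasFDerivAt_snd
  have hN := hfst.const_mul Δ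
  have hD := (hfst.const_mul κ).add (hsnd.const_mul 2)
  have hinv := (hasDerivAt_inv hxy).comp_hasFDerivAt (x, y) hD
  have hu := hN.mul hinv
  have harc := (Real.hasDerivAt_arctan (Δ * x * (κ * x + 2 * y)⁻¹)).comp_hasFDerivAt (x, y) hu
  have ha := harc.const_mul (2 * κ / Δ)
  have hexp :=
    (Real.hasDerivAt_exp (2 * κ / Δ * Real.arctan (Δ * x * (κ * x + 2 * y)⁻¹))).comp_hasFDerivAt
      (x, y) ha
  have hQ := (((hfst.mul hfst).add (hsnd.mul hsnd)).add ((hfst.const_mul κ).mul hsnd)).const_mul ((2:ℝ)⁻¹)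
  have hfd := hQ.mul hexp
  have hfdΦ := hfd.congr_of_eventuallyEq
    (f₁ := fun p : ℝ × ℝ => (p.1 ^ 2 + p.2 ^ 2 + κ * p.1 * p.2) / 2 *
      Real.exp (2 * κ / Δ * Real.arctan (Δ * p.1 / (κ * p.1 + 2 * p.2))))
    (Filter.Eventually.of_forall (fun p => by
      simp only [Function.comp_apply, Function.comp, div_eq_mul_inv, Pi.mul_apply, Pi.add_apply, Pi.pow_apply]; ring_nf))
  have hΦeq : Φ = fun p : ℝ × ℝ => (p.1 ^ 2 + p.2 ^ 2 + κ * p.1 * p.2) / 2 *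
      Real.exp (2 * κ / Δ * Real.arctan (Δ * p.1 / (κ * p.1 + 2 * p.2))) := funext hΦ
  rw [hΦeq]
  have hfderiv := hfdΦ.fderiv
  have hE : ρ (x, y) = Real.exp (2 * κ / Δ * Real.arctan (Δ * x / (κ * x + 2 * y))) := hρ _
  have hEne : ρ (x, y) ≠ 0 := by rw [hE]; positivity
  have h1u : (1 : ℝ) + (Δ * x * (κ * x + 2 * y)⁻¹) ^ 2 ≠ 0 := by positivity
  constructor
  · unfold pdY
    rw [hfderiv, hE]
    simp only [ContinuousLinearMap.add_apply, ContinuousLinearMap.smul_apply,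
      ContinuousLinearMap.sub_apply, ContinuousLinearMap.coe_fst', ContinuousLinearMap.coe_snd',
      Function.comp, smul_eq_mul, mul_zero, mul_one, Real.exp_ne_zero,
      ContinuousLinearMap.coe_comp', Pi.mul_apply, Pi.add_apply, Pi.pow_apply]
    simp only [div_eq_mul_inv]
    rw [mul_pow, mul_pow, hΔsq]
    field_simp
    linear_combination (Δ * x * κ) * (mul_inv_cancel₀ hDsq.ne')
  · unfold pdX
    rw [hfderiv, hE]
    simp only [ContinuousLinearMap.add_apply, ContinuousLinearMap.smul_apply,
      ContinuousLinearMap.sub_apply, ContinuousLinearMap.coe_fst', ContinuousLinearMap.coe_snd',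
      Function.comp, smul_eq_mul, mul_zero, mul_one, Real.exp_ne_zero,
      ContinuousLinearMap.coe_comp', Pi.mul_apply, Pi.add_apply, Pi.pow_apply]
    simp only [div_eq_mul_inv]
    rw [mul_pow, mul_pow, hΔsq]
    field_simp
    linear_combination (κ * y) * (mul_inv_cancel₀ hDsq.ne')
end

section
/- The critically damped harmonic oscillator ẋ = y, ẏ = −x−2y is Hamiltonian with respect to Φ^C(x,y) = ½(x+y)²exp(2x/(x+y)) and ρ^C(x,y) = exp(2x/(x+y)): namely y = (ρ^C)^{-1}∂Φ^C/∂y and −x−2y = −(ρ^C)^{-1}∂Φ^C/∂x hold on {(x,y) : x+y ≠ 0}. -/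
open Real

/-- The critically damped oscillator ẋ = y, ẏ = −x−2y is Hamiltonian with
respect to Φ^C = ½(x+y)²exp(2x/(x+y)) and ρ^C = exp(2x/(x+y)) on {x+y ≠ 0}. -/
theorem critically_damped_hamiltonian
    (Φ ρ : ℝ × ℝ → ℝ)
    (hΦ : ∀ p : ℝ × ℝ, Φ p = (p.1 + p.2) ^ 2 / 2 * Real.exp (2 * p.1 / (p.1 + p.2)))
    (hρ : ∀ p : ℝ × ℝ, ρ p = Real.exp (2 * p.1 / (p.1 + p.2))) :
    ∀ x y : ℝ, x + y ≠ 0 →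
      y = (ρ (x, y))⁻¹ * pdY Φ (x, y) ∧
      -x - 2 * y = -((ρ (x, y))⁻¹ * pdX Φ (x, y)) := by
  intro x y h
  have h1 : HasFDerivAt (fun p : ℝ × ℝ => p.1 + p.2)
      (ContinuousLinearMap.fst ℝ ℝ ℝ + ContinuousLinearMap.snd ℝ ℝ ℝ) (x, y) :=
    hasFDerivAt_fst.add hasFDerivAt_snd
  have h2 : HasFDerivAt (fun p : ℝ × ℝ => 2 * p.1)
      ((2:ℝ) • ContinuousLinearMap.fst ℝ ℝ ℝ) (x, y) := hasFDerivAt_fst.const_mul 2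
  have hinv := (hasFDerivAt_inv h).comp (x, y) h1
  have h3 := h2.mul hinv
  have h4 := h3.exp
  have h5 := ((h1.mul h1).const_mul (1/2:ℝ))
  have h6 := h5.mul h4
  have hEq : Φ = fun p : ℝ × ℝ =>
      1 / 2 * ((p.1 + p.2) * (p.1 + p.2)) *
        Real.exp (2 * p.1 * ((fun x : ℝ => x⁻¹) ∘ fun p : ℝ × ℝ => p.1 + p.2) p) := by
    funext p
    simp only [Function.comp_apply]
    rw [hΦ p, div_eq_mul_inv]
    ring
  simp only [Pi.mul_def] at h6
  rw [← hEq] at h6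
  have hf := h6.fderiv
  have hexp : Real.exp (2 * x / (x + y)) ≠ 0 := Real.exp_ne_zero _
  have hd : 2 * x * (x + y)⁻¹ = 2 * x / (x + y) := by ring
  constructor
  · rw [hρ]
    unfold pdY
    rw [hf]
    simp only [ContinuousLinearMap.add_apply, ContinuousLinearMap.smul_apply,
      ContinuousLinearMap.comp_apply, ContinuousLinearMap.coe_fst',
      ContinuousLinearMap.coe_snd', ContinuousLinearMap.smulRight_apply,
      ContinuousLinearMap.one_apply, ContinuousLinearMap.toSpanSingleton_apply,
      Function.comp_apply, smul_eq_mul, hd]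
    field_simp
    ring
  · rw [hρ]
    unfold pdX
    rw [hf]
    simp only [ContinuousLinearMap.add_apply, ContinuousLinearMap.smul_apply,
      ContinuousLinearMap.comp_apply, ContinuousLinearMap.coe_fst',
      ContinuousLinearMap.coe_snd', ContinuousLinearMap.smulRight_apply,
      ContinuousLinearMap.one_apply, ContinuousLinearMap.toSpanSingleton_apply,
      Function.comp_apply, smul_eq_mul, hd]
    field_simp
    ring
end

section
/- The density ρ^D(x,y) = exp((2κ/Δ)·arctan(Δx/(κx+2y))) defines an invariant measure for the damped harmonic oscillator: the divergence identity ∂_x(ρ^D·y) + ∂_y(ρ^D·(−x−κy)) = 0 holds on the open set κx+2y ≠ 0, for 0 < κ < 2 and Δ = (4−κ²)^{1/2}. -/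
open Real

lemma pdX_eq_deriv (f : ℝ × ℝ → ℝ) (x y : ℝ) (hf : DifferentiableAt ℝ f (x, y)) :
    pdX f (x, y) = deriv (fun t => f (t, y)) x := by
  have hL : HasDerivAt (fun t : ℝ => (t, y)) ((1 : ℝ), (0 : ℝ)) x :=
    (hasDerivAt_id x).prodMk (hasDerivAt_const x y)
  exact ((hf.hasFDerivAt.comp_hasDerivAt x hL).deriv).symm

lemma pdY_eq_deriv (f : ℝ × ℝ → ℝ) (x y : ℝ) (hf : DifferentiableAt ℝ f (x, y)) :
    pdY f (x, y) = deriv (fun t => f (x, t)) y := by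
  have hL : HasDerivAt (fun t : ℝ => (x, t)) ((0 : ℝ), (1 : ℝ)) y :=
    (hasDerivAt_const y x).prodMk (hasDerivAt_id y)
  exact ((hf.hasFDerivAt.comp_hasDerivAt y hL).deriv).symm

/-- ρ^D = exp((2κ/Δ)arctan(Δx/(κx+2y))) is an invariant density for the damped
oscillator: ∂_x(ρ^D y) + ∂_y(ρ^D(−x−κy)) = 0 on {κx+2y ≠ 0}. -/
theorem damped_oscillator_invariant_measure
    (κ Δ : ℝ) (hκ : 0 < κ) (hκ2 : κ < 2) (hΔ : Δ = Real.sqrt (4 - κ ^ 2))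
    (ρ : ℝ × ℝ → ℝ)
    (hρ : ∀ p : ℝ × ℝ, ρ p =
      Real.exp (2 * κ / Δ * Real.arctan (Δ * p.1 / (κ * p.1 + 2 * p.2)))) :
    ∀ x y : ℝ, κ * x + 2 * y ≠ 0 →
      pdX (fun p => ρ p * p.2) (x, y)
        + pdY (fun p => ρ p * (-p.1 - κ * p.2)) (x, y) = 0 := by
  have hρfun : ρ = fun q : ℝ × ℝ =>
      Real.exp (2 * κ / Δ * Real.arctan (Δ * q.1 / (κ * q.1 + 2 * q.2))) := funext hρ
  subst hρfun
  intro x y hD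
  have h4 : 0 < 4 - κ ^ 2 := by nlinarith
  have hΔpos : 0 < Δ := hΔ ▸ Real.sqrt_pos.mpr h4
  have hΔ2 : Δ ^ 2 = 4 - κ ^ 2 := by rw [hΔ]; exact Real.sq_sqrt h4.le
  -- differentiability of the 2D density at p
  have hden : DifferentiableAt ℝ (fun q : ℝ × ℝ => κ * q.1 + 2 * q.2) (x, y) := by fun_prop
  have hnum : DifferentiableAt ℝ (fun q : ℝ × ℝ => Δ * q.1) (x, y) := by fun_prop
  have hq2 : DifferentiableAt ℝ (fun q : ℝ × ℝ => Δ * q.1 / (κ * q.1 + 2 * q.2)) (x, y) :=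
by
    simpa [div_eq_mul_inv] using hnum.fun_mul (hden.inv hD)
  have hρdiff : DifferentiableAt ℝ
      (fun q : ℝ × ℝ => Real.exp (2 * κ / Δ * Real.arctan (Δ * q.1 / (κ * q.1 + 2 * q.2))))
      (x, y) := ((hq2.arctan).const_mul (2 * κ / Δ)).exp
  -- slice derivatives
  have huX := HasDerivAt.fun_div ((hasDerivAt_id' x).const_mul Δ)
      (((hasDerivAt_id' x).const_mul κ).add_const (2 * y)) hD
  have hgX := ((huX.arctan.const_mul (2 * κ / Δ)).exp).mul_const y
  have huY := HasDerivAt.fun_div (hasDerivAt_const y (Δ * x))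
      (((hasDerivAt_id' y).const_mul 2).const_add (κ * x)) hD
  have hlin := (hasDerivAt_const y (-x)).fun_sub ((hasDerivAt_id' y).const_mul κ)
  have hgY := ((huY.arctan.const_mul (2 * κ / Δ)).exp).fun_mul hlin
  rw [pdX_eq_deriv _ _ _ (hρdiff.fun_mul (by fun_prop)),
      pdY_eq_deriv _ _ _ (hρdiff.fun_mul (by fun_prop))]
  simp only
  rw [hgX.deriv, hgY.deriv]
  -- algebra
  have hS : (0:ℝ) < x ^ 2 + κ * x * y + y ^ 2 := by
    nlinarith [pow_two_pos_of_ne_zero hD, mul_nonneg h4.le (sq_nonneg x)]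
  set A := κ * x + 2 * y with hA
  set E := Real.exp (2 * κ / Δ * Real.arctan (Δ * x / A)) with hE
  have hu2 : 1 + (Δ * x / A) ^ 2 = 4 * (x ^ 2 + κ * x * y + y ^ 2) / A ^ 2 := by
    field_simp
    linear_combination x ^ 2 * hΔ2
  rw [hu2]
  field_simp
  have hS' : κ * y * x + y ^ 2 + x ^ 2 ≠ 0 := (by nlinarith : (0:ℝ) < κ * y * x + y ^ 2 + x ^ 2).ne'
  rw [hA]
  have hinv : (κ * y * x + y ^ 2 + x ^ 2)⁻¹ * (κ * y * x + y ^ 2 + x ^ 2) = 1 := inv_mul_cancel₀ hS'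
  linear_combination (4 * E * κ * Δ) * hinv
end
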